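/- Under the hypotheses of the previous result (stationarity equations (a), (b), (c) of the M1 saddle point problem with $\alpha=\rho$ established), the vector $\beta$ satisfies the supervised logistic score equation using only the labeled data: $\sum_{i=1}^n \{y_i - \frac{\rho\exp(z_i^T\beta)}{1-\rho+\rho\exp(z_i^T\beta)}\} z_i = 0$. Equivalently, with $\beta^c = \beta + (\log\frac{\rho}{1-\rho}, 0, \dots, 0)^T$, $\sum_{i=1}^n \{y_i - \frac{\exp(z_i^T\beta^c)}{1+\exp(z_i^T\beta^c)}\} z_i = 0$, so the ETM-based estimator of the logistic regression parameters coincides algebraically with the supervised logistic MLE. -/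

import Mathlib

open Real Finset

/-- Under the M1 stationarity equations (a), (b), (c), the parameter `β` satisfies the
supervised logistic score equation on the labeled data only, and equivalently, with
`βᶜ = β + (log(ρ/(1-ρ)), 0, …, 0)ᵀ`, the standard logistic regression score equation
holds: the ETM-based estimator of the logistic parameters coincides with the supervised
logistic MLE. -/
theorem m1_reduces_to_logistic_score
    (d n N : ℕ) (hnN : n ≤ N)
    (z : ℕ → Fin (d + 1) → ℝ) (y : ℕ → ℝ) (β : Fin (d + 1) → ℝ) (ρ α : ℝ)
    (hz : ∀ i, z i 0 = 1)
    (hy : ∀ i, i < n → y i = 0 ∨ y i = 1)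
    (hρ : ρ ∈ Set.Ioo (0 : ℝ) 1) (hα : α ∈ Set.Ioo (0 : ℝ) 1)
    (ha : ∑ i ∈ Finset.range N,
      (1 - Real.exp (∑ j, z i j * β j)) / (1 - α + α * Real.exp (∑ j, z i j * β j)) = 0)
    (hb : ∑ i ∈ Finset.Ico n N,
        (Real.exp (∑ j, z i j * β j) - 1) / (1 - ρ + ρ * Real.exp (∑ j, z i j * β j))
      + ∑ i ∈ Finset.range n, (y i / ρ - (1 - y i) / (1 - ρ)) = 0)
    (hc : ∀ k : Fin (d + 1),
        ∑ i ∈ Finset.range n, y i * z i k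
      + ∑ i ∈ Finset.Ico n N,
          ρ * Real.exp (∑ j, z i j * β j) * z i k / (1 - ρ + ρ * Real.exp (∑ j, z i j * β j))
      - ∑ i ∈ Finset.range N,
          α * Real.exp (∑ j, z i j * β j) * z i k / (1 - α + α * Real.exp (∑ j, z i j * β j))
        = 0) :
    (∀ k : Fin (d + 1),
      ∑ i ∈ Finset.range n,
        (y i - ρ * Real.exp (∑ j, z i j * β j)
            / (1 - ρ + ρ * Real.exp (∑ j, z i j * β j))) * z i k = 0)
    ∧ (∀ k : Fin (d + 1),
      ∑ i ∈ Finset.range n,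
        (y i - Real.exp (∑ j, z i j * (β j + if j = 0 then Real.log (ρ / (1 - ρ)) else 0))
            / (1 + Real.exp (∑ j, z i j * (β j + if j = 0 then Real.log (ρ / (1 - ρ)) else 0))))
          * z i k = 0) := by
  obtain ⟨hρ0, hρ1⟩ := hρ
  obtain ⟨hα0, hα1⟩ := hα
  have h1ρ : (0:ℝ) < 1 - ρ := by linarith
  have h1α : (0:ℝ) < 1 - α := by linarith
  have hEpos : ∀ i : ℕ, 0 < Real.exp (∑ j, z i j * β j) := fun i => Real.exp_pos _
  have hD : ∀ i, 0 < 1 - ρ + ρ * Real.exp (∑ j, z i j * β j) := fun i => by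
    nlinarith [hEpos i]
  have hDα : ∀ i, 0 < 1 - α + α * Real.exp (∑ j, z i j * β j) := fun i => by
    nlinarith [hEpos i]
  have key1 : ∀ k : Fin (d + 1),
      ∑ i ∈ Finset.range n,
        (y i - ρ * Real.exp (∑ j, z i j * β j)
            / (1 - ρ + ρ * Real.exp (∑ j, z i j * β j))) * z i k = 0 := by
    rcases Nat.eq_zero_or_pos N with hN | hN
    · have hn : n = 0 := by omega
      subst hn; simp
    · -- First derive α = ρ
      have hαρ : α = ρ := by
        -- (a) transformed: ∑ 1/Dα = N
        have ha' : ∑ i ∈ Finset.range N,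
            (1 - α + α * Real.exp (∑ j, z i j * β j))⁻¹ = (N : ℝ) := by
          have h1 : ∀ i ∈ Finset.range N,
              (1 - Real.exp (∑ j, z i j * β j)) /
                (1 - α + α * Real.exp (∑ j, z i j * β j))
              = α⁻¹ * ((1 - α + α * Real.exp (∑ j, z i j * β j))⁻¹ - 1) := by
            intro i _
            have hd := ne_of_gt (hDα i)
            have hα' := ne_of_gt hα0
            field_simp
            ring
          rw [Finset.sum_congr rfl h1, ← Finset.mul_sum] at ha
          have h2 : ∑ i ∈ Finset.range N,
              ((1 - α + α * Real.exp (∑ j, z i j * β j))⁻¹ - 1) = 0 := by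
            rcases mul_eq_zero.mp ha with h | h
            · exact absurd h (inv_ne_zero (ne_of_gt hα0))
            · exact h
          rw [Finset.sum_sub_distrib, Finset.sum_const, Finset.card_range,
            nsmul_eq_mul, mul_one] at h2
          linarith
        -- (b) transformed
        have hb' : ((N : ℝ) - (n : ℝ)
              - ∑ i ∈ Finset.Ico n N, (1 - ρ + ρ * Real.exp (∑ j, z i j * β j))⁻¹)
              * (ρ * (1 - ρ))
            + ((∑ i ∈ Finset.range n, y i) - (n : ℝ) * ρ) * ρ = 0 := by
          have h1 : ∀ i ∈ Finset.Ico n N,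
              (Real.exp (∑ j, z i j * β j) - 1) /
                (1 - ρ + ρ * Real.exp (∑ j, z i j * β j))
              = ρ⁻¹ * (1 - (1 - ρ + ρ * Real.exp (∑ j, z i j * β j))⁻¹) := by
            intro i _
            field_simp
            ring
          have h2 : ∀ i ∈ Finset.range n,
              (y i / ρ - (1 - y i) / (1 - ρ)) = (y i - ρ) * (ρ * (1 - ρ))⁻¹ := by
            intro i _
            field_simp
            ring
          rw [Finset.sum_congr rfl h1, Finset.sum_congr rfl h2, ← Finset.mul_sum,
            ← Finset.sum_mul, Finset.sum_sub_distrib, Finset.sum_const,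
            Nat.card_Ico, nsmul_eq_mul, mul_one, Finset.sum_sub_distrib,
            Finset.sum_const, Finset.card_range, nsmul_eq_mul] at hb
          rw [Nat.cast_sub hnN] at hb
          have hρne : ρ ≠ 0 := ne_of_gt hρ0
          have h1ρne : (1 : ℝ) - ρ ≠ 0 := ne_of_gt h1ρ
          field_simp at hb
          simp only [one_div] at hb
          linear_combination ρ * hb
        -- (c) at k = 0
        have hc0 := hc 0
        have h3 : ∀ i ∈ Finset.Ico n N,
            ρ * Real.exp (∑ j, z i j * β j) * z i 0 /
              (1 - ρ + ρ * Real.exp (∑ j, z i j * β j))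
            = 1 - (1 - ρ) * (1 - ρ + ρ * Real.exp (∑ j, z i j * β j))⁻¹ := by
          intro i _
          rw [hz i, mul_one]
          field_simp
          ring
        have h4 : ∀ i ∈ Finset.range N,
            α * Real.exp (∑ j, z i j * β j) * z i 0 /
              (1 - α + α * Real.exp (∑ j, z i j * β j))
            = 1 - (1 - α) * (1 - α + α * Real.exp (∑ j, z i j * β j))⁻¹ := by
          intro i _
          rw [hz i, mul_one]
          field_simp
          ring
        have h5 : ∀ i ∈ Finset.range n, y i * z i 0 = y i := by
          intro i _; rw [hz i, mul_one]
        rw [Finset.sum_congr rfl h3, Finset.sum_congr rfl h4, Finset.sum_congr rfl h5,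
          Finset.sum_sub_distrib, Finset.sum_const, Nat.card_Ico, nsmul_eq_mul,
          mul_one, ← Finset.mul_sum, Finset.sum_sub_distrib, Finset.sum_const,
          Finset.card_range, nsmul_eq_mul, mul_one, ← Finset.mul_sum,
          Nat.cast_sub hnN, ha'] at hc0
        -- combine: (ρ - α) * N = 0
        have hkey : ρ * ((ρ - α) * (N : ℝ)) = 0 := by
          linear_combination ρ * hc0 - hb'
        have hkey2 : (ρ - α) * (N : ℝ) = 0 := by
          rcases mul_eq_zero.mp hkey with h | h
          · exact absurd h (ne_of_gt hρ0)
          · exact h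
        have hNpos : (0:ℝ) < (N : ℝ) := by exact_mod_cast hN
        rcases mul_eq_zero.mp hkey2 with h | h
        · linarith
        · linarith
      subst hαρ
      intro k
      have h := hc k
      have hsplit : ∑ i ∈ Finset.range N,
          α * Real.exp (∑ j, z i j * β j) * z i k /
            (1 - α + α * Real.exp (∑ j, z i j * β j))
          = ∑ i ∈ Finset.range n,
              α * Real.exp (∑ j, z i j * β j) * z i k /
                (1 - α + α * Real.exp (∑ j, z i j * β j))
          + ∑ i ∈ Finset.Ico n N,
              α * Real.exp (∑ j, z i j * β j) * z i k /
                (1 - α + α * Real.exp (∑ j, z i j * β j)) := by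
        rw [Finset.range_eq_Ico, ← Finset.sum_Ico_consecutive _ (Nat.zero_le n) hnN,
          ← Finset.range_eq_Ico]
      rw [hsplit] at h
      have hterm : ∀ i ∈ Finset.range n,
          (y i - α * Real.exp (∑ j, z i j * β j)
              / (1 - α + α * Real.exp (∑ j, z i j * β j))) * z i k
          = y i * z i k - α * Real.exp (∑ j, z i j * β j) * z i k /
              (1 - α + α * Real.exp (∑ j, z i j * β j)) := by
        intro i _; ring
      rw [Finset.sum_congr rfl hterm, Finset.sum_sub_distrib]
      linarith
  refine ⟨key1, fun k => ?_⟩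
  have hexp : ∀ i : ℕ,
      Real.exp (∑ j, z i j * (β j + if j = 0 then Real.log (ρ / (1 - ρ)) else 0))
      = Real.exp (∑ j, z i j * β j) * (ρ / (1 - ρ)) := by
    intro i
    have hsum : ∑ j, z i j * (β j + if j = 0 then Real.log (ρ / (1 - ρ)) else 0)
        = (∑ j, z i j * β j) + Real.log (ρ / (1 - ρ)) := by
      have : ∀ j : Fin (d + 1),
          z i j * (β j + if j = 0 then Real.log (ρ / (1 - ρ)) else 0)
          = z i j * β j + (if j = 0 then z i j * Real.log (ρ / (1 - ρ)) else 0) := by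
        intro j
        by_cases hj : j = 0 <;> simp [hj, mul_add]
      rw [Finset.sum_congr rfl (fun j _ => this j), Finset.sum_add_distrib,
        Finset.sum_ite_eq' Finset.univ (0 : Fin (d + 1))]
      simp [hz i]
    rw [hsum, Real.exp_add, Real.exp_log (by positivity)]
  have hterm2 : ∀ i ∈ Finset.range n,
      (y i - Real.exp (∑ j, z i j * (β j + if j = 0 then Real.log (ρ / (1 - ρ)) else 0))
          / (1 + Real.exp (∑ j, z i j * (β j + if j = 0 then Real.log (ρ / (1 - ρ)) else 0))))
        * z i k
      = (y i - ρ * Real.exp (∑ j, z i j * β j)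
            / (1 - ρ + ρ * Real.exp (∑ j, z i j * β j))) * z i k := by
    intro i _
    rw [hexp i]
    have hE := Real.exp_pos (∑ j, z i j * β j)
    have hD : (0:ℝ) < 1 - ρ + ρ * Real.exp (∑ j, z i j * β j) := by nlinarith
    have hD2 : (0:ℝ) < 1 + Real.exp (∑ j, z i j * β j) * (ρ / (1 - ρ)) := by positivity
    have heq : Real.exp (∑ j, z i j * β j) * (ρ / (1 - ρ))
          / (1 + Real.exp (∑ j, z i j * β j) * (ρ / (1 - ρ)))
        = ρ * Real.exp (∑ j, z i j * β j)
          / (1 - ρ + ρ * Real.exp (∑ j, z i j * β j)) := by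
      rw [div_eq_div_iff (ne_of_gt hD2) (ne_of_gt hD)]
      field_simp
    rw [heq]
  rw [Finset.sum_congr rfl hterm2]
  exact key1 k
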